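/- Let H be a real Hilbert space, let f_1, …, f_n be an orthonormal family in H, and let P be the orthogonal projection of H onto the span of {f_1, …, f_n}. Let b ∈ H and let m be a Borel measure on H with m({0}) = 0 such that ∫_H ‖ξ‖² dm(ξ) < ∞ and ∫_H |⟨χ(ξ), f_k⟩| dm(ξ) < ∞ for every k = 1, …, n. Let u be in the span of {f_1, …, f_n} (so P(u) = u) and assume ⟨ξ, u⟩ ≥ 0 for m-almost every ξ. Define b_P := P(b) + ∫_{{ξ : ‖P(ξ)‖ ≤ 1 < ‖ξ‖}} P(ξ) dm(ξ) (a Bochner integral in H, which exists). Then ⟨b, u⟩ − ∫_H (e^{−⟨ξ,u⟩} − 1 + ⟨χ(ξ), u⟩) dm(ξ) = ⟨b_P, u⟩ − ∫_H (e^{−⟨P(ξ),u⟩} − 1 + ⟨χ(P(ξ)), u⟩) dm(ξ), with all integrals absolutely convergent. -/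

import Mathlib

open MeasureTheory
open scoped RealInnerProductSpace

private lemma exp_taylor_aux {t : ℝ} (ht : 0 ≤ t) : |Real.exp (-t) - 1 + t| ≤ t ^ 2 / 2 := by
  have h1 : 1 - t ≤ Real.exp (-t) := by have := Real.add_one_le_exp (-t); linarith
  have h2 : 1 + t + t ^ 2 / 2 ≤ Real.exp t := Real.quadratic_le_exp_of_nonneg ht
  have h3 : Real.exp (-t) * Real.exp t = 1 := by rw [← Real.exp_add]; simp
  have h4 : (0:ℝ) < Real.exp (-t) := Real.exp_pos _
  have h5 : Real.exp (-t) * (1 + t + t ^ 2 / 2) ≤ 1 := by nlinarith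
  have h6 : (0:ℝ) < 1 + t + t ^ 2 / 2 := by positivity
  rw [abs_le]
  constructor
  · nlinarith [sq_nonneg t]
  · nlinarith [sq_nonneg (t * t), sq_nonneg t]

/-- Change-of-truncation identity for the projected parameters: with `P` the orthogonal
projection onto the span of an orthonormal family `f_1, …, f_n`, `χ(ξ) = ξ · 1_{‖ξ‖ ≤ 1}(ξ)`
the truncation function, `u` in the span with `⟪ξ, u⟫ ≥ 0` `m`-a.e., and
`b_P = P(b) + ∫_{‖Pξ‖ ≤ 1 < ‖ξ‖} P(ξ) dm`, one has
`⟪b,u⟫ − ∫ (e^{−⟪ξ,u⟫} − 1 + ⟪χ(ξ),u⟫) dm = ⟪b_P,u⟫ − ∫ (e^{−⟪Pξ,u⟫} − 1 + ⟪χ(Pξ),u⟫) dm`,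
with all integrals absolutely convergent. -/
theorem stmt_12 {H : Type*} [NormedAddCommGroup H] [InnerProductSpace ℝ H] [CompleteSpace H]
    [MeasurableSpace H] [BorelSpace H]
    (n : ℕ) (f : Fin n → H) (hf : Orthonormal ℝ f)
    (P : H →L[ℝ] H)
    (hP : ∀ x : H, P x =
      (haveI : FiniteDimensional ℝ (Submodule.span ℝ (Set.range f)) :=
        FiniteDimensional.span_of_finite ℝ (Set.finite_range f)
       (Submodule.orthogonalProjectionOnto (Submodule.span ℝ (Set.range f)) x : H)))
    (b : H)
    (m : Measure H) (hm0 : m {0} = 0)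
    (hm2 : Integrable (fun ξ : H => ‖ξ‖ ^ 2) m)
    (hm1 : ∀ k : Fin n,
      Integrable (fun ξ : H => |⟪(if ‖ξ‖ ≤ 1 then ξ else 0), f k⟫|) m)
    (u : H) (hu : u ∈ Submodule.span ℝ (Set.range f))
    (hpos : ∀ᵐ ξ ∂m, 0 ≤ ⟪ξ, u⟫) :
    IntegrableOn (fun ξ : H => P ξ) {ξ : H | ‖P ξ‖ ≤ 1 ∧ 1 < ‖ξ‖} m ∧
    Integrable (fun ξ : H =>
      Real.exp (-⟪ξ, u⟫) - 1 + ⟪(if ‖ξ‖ ≤ 1 then ξ else 0), u⟫) m ∧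
    Integrable (fun ξ : H =>
      Real.exp (-⟪P ξ, u⟫) - 1 + ⟪(if ‖P ξ‖ ≤ 1 then P ξ else 0), u⟫) m ∧
    ⟪b, u⟫ - ∫ ξ, (Real.exp (-⟪ξ, u⟫) - 1 + ⟪(if ‖ξ‖ ≤ 1 then ξ else 0), u⟫) ∂m
      = ⟪P b + ∫ ξ in {ξ : H | ‖P ξ‖ ≤ 1 ∧ 1 < ‖ξ‖}, P ξ ∂m, u⟫
        - ∫ ξ, (Real.exp (-⟪P ξ, u⟫) - 1 + ⟪(if ‖P ξ‖ ≤ 1 then P ξ else 0), u⟫) ∂m := by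
  haveI : FiniteDimensional ℝ (Submodule.span ℝ (Set.range f)) :=
    FiniteDimensional.span_of_finite ℝ (Set.finite_range f)
  set K := Submodule.span ℝ (Set.range f) with hK
  -- basic facts about P
  have hPu : P u = u := (hP u).trans (Submodule.starProjection_eq_self_iff.mpr hu)
  have hsym : ∀ x y : H, ⟪P x, y⟫ = ⟪x, P y⟫ := fun x y => by
    rw [hP x, hP y]; exact Submodule.inner_starProjection_left_eq_right K x y
  have hPnorm : ∀ x : H, ‖P x‖ ≤ ‖x‖ := fun x => by
    rw [hP x]
    calc ‖(Submodule.orthogonalProjectionOnto K x : H)‖ = ‖Submodule.orthogonalProjectionOnto K x‖ := rfl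
      _ ≤ ‖Submodule.orthogonalProjectionOnto K‖ * ‖x‖ := (Submodule.orthogonalProjectionOnto K).le_opNorm x
      _ ≤ 1 * ‖x‖ := by
          have := Submodule.orthogonalProjectionOnto_norm_le K
          have : (0:ℝ) ≤ ‖x‖ := norm_nonneg x
          nlinarith [Submodule.orthogonalProjectionOnto_norm_le K, norm_nonneg x,
            norm_nonneg (Submodule.orthogonalProjectionOnto K)]
      _ = ‖x‖ := one_mul _
  have hinner : ∀ ξ : H, ⟪P ξ, u⟫ = ⟪ξ, u⟫ := fun ξ => by rw [hsym, hPu]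
  set A : Set H := {ξ : H | ‖P ξ‖ ≤ 1 ∧ 1 < ‖ξ‖} with hAdef
  set g : H → ℝ := fun ξ => Real.exp (-⟪ξ, u⟫) - 1 + ⟪(if ‖ξ‖ ≤ 1 then ξ else 0), u⟫
    with hgdef
  have hPm : Measurable fun ξ : H => P ξ := P.continuous.measurable
  have hA : MeasurableSet A := by
    have h1 : MeasurableSet {ξ : H | ‖P ξ‖ ≤ 1} :=
      measurableSet_le (measurable_norm.comp hPm) measurable_const
    have h2 : MeasurableSet {ξ : H | 1 < ‖ξ‖} :=
      measurableSet_lt measurable_const measurable_norm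
    exact h1.inter h2
  -- measurability of g
  have hgc : Measurable g := by
    have h1 : Measurable fun ξ : H => ⟪ξ, u⟫ :=
      (Continuous.inner continuous_id continuous_const).measurable
    have h2 : Measurable fun ξ : H => (if ‖ξ‖ ≤ 1 then ξ else (0:H)) :=
      Measurable.ite (measurableSet_le measurable_norm measurable_const)
        measurable_id measurable_const
    have h3 : Measurable fun ξ : H => ⟪(if ‖ξ‖ ≤ 1 then ξ else (0:H)), u⟫ :=
      ((Continuous.inner continuous_id continuous_const).measurable).comp h2
    exact ((Real.measurable_exp.comp h1.neg).sub measurable_const).add h3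
  -- integrability on A
  have hPsm : StronglyMeasurable (fun ξ : H => P ξ) := by
    rw [stronglyMeasurable_iff_measurable_separable]
    refine ⟨hPm, ?_⟩
    have hsep : TopologicalSpace.IsSeparable (K : Set H) :=
      (Set.finite_range f).isSeparable.span
    refine hsep.mono ?_
    rintro - ⟨ξ, rfl⟩
    show P ξ ∈ (K : Set H)
    rw [hP ξ]
    exact (Submodule.orthogonalProjectionOnto K ξ).2
  have hIA : IntegrableOn (fun ξ : H => P ξ) A m := by
    refine Integrable.mono' ((hm2.restrict (s := A))) hPsm.aestronglyMeasurable.restrict ?_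
    filter_upwards [ae_restrict_mem hA] with ξ hξ
    have h1 : ‖P ξ‖ ≤ 1 := hξ.1
    have h2 : (1:ℝ) < ‖ξ‖ := hξ.2
    calc ‖P ξ‖ ≤ 1 := h1
      _ ≤ ‖ξ‖ ^ 2 := by nlinarith
  -- the key pointwise bound
  have hC1 : (1:ℝ) ≤ 1 + ‖u‖ ^ 2 / 2 := by nlinarith [sq_nonneg ‖u‖]
  have key : ∀ x : H, 0 ≤ ⟪x, u⟫ → |g x| ≤ (1 + ‖u‖ ^ 2 / 2) * ‖x‖ ^ 2 := by
    intro x hx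
    by_cases h : ‖x‖ ≤ 1
    · have hb : |⟪x, u⟫| ≤ ‖x‖ * ‖u‖ := abs_real_inner_le_norm x u
      have := exp_taylor_aux hx
      simp only [hgdef, if_pos h]
      have h2 : ⟪x, u⟫ ^ 2 ≤ ‖x‖ ^ 2 * ‖u‖ ^ 2 := by
        nlinarith [abs_nonneg ⟪x, u⟫, norm_nonneg x, norm_nonneg u, sq_abs ⟪x, u⟫]
      calc |Real.exp (-⟪x, u⟫) - 1 + ⟪x, u⟫| ≤ ⟪x, u⟫ ^ 2 / 2 := this
        _ ≤ ‖x‖ ^ 2 * ‖u‖ ^ 2 / 2 := by linarith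
        _ ≤ (1 + ‖u‖ ^ 2 / 2) * ‖x‖ ^ 2 := by nlinarith [sq_nonneg ‖x‖]
    · have h1 : (1:ℝ) < ‖x‖ := not_le.mp h
      have he1 : Real.exp (-⟪x, u⟫) ≤ 1 := by
        calc Real.exp (-⟪x, u⟫) ≤ Real.exp 0 :=
              Real.exp_le_exp.mpr (neg_nonpos.mpr hx)
          _ = 1 := Real.exp_zero
      have he0 : (0:ℝ) < Real.exp (-⟪x, u⟫) := Real.exp_pos _
      simp only [hgdef, if_neg h, inner_zero_left, add_zero]
      rw [abs_le]
      constructor <;> nlinarith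
  -- integrability of g
  have hg1 : Integrable g m := by
    refine Integrable.mono' (hm2.const_mul (1 + ‖u‖ ^ 2 / 2)) hgc.aestronglyMeasurable ?_
    filter_upwards [hpos] with ξ hξ
    exact key ξ hξ
  -- integrability of g ∘ P
  have hg2 : Integrable (fun ξ : H => g (P ξ)) m := by
    refine Integrable.mono' (hm2.const_mul (1 + ‖u‖ ^ 2 / 2)) (hgc.comp hPm).aestronglyMeasurable ?_
    filter_upwards [hpos] with ξ hξ
    have h1 : (0:ℝ) ≤ ⟪P ξ, u⟫ := by rw [hinner]; exact hξ
    calc ‖g (P ξ)‖ ≤ (1 + ‖u‖ ^ 2 / 2) * ‖P ξ‖ ^ 2 := key (P ξ) h1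
      _ ≤ (1 + ‖u‖ ^ 2 / 2) * ‖ξ‖ ^ 2 :=
          mul_le_mul_of_nonneg_left
            (pow_le_pow_left₀ (norm_nonneg _) (hPnorm ξ) 2)
            (le_trans zero_le_one hC1)
  -- the pointwise difference identity
  have hdiff : ∀ ξ : H, g (P ξ) - g ξ = Set.indicator A (fun ξ => ⟪P ξ, u⟫) ξ := by
    intro ξ
    by_cases h1 : ‖ξ‖ ≤ 1
    · have h2 : ‖P ξ‖ ≤ 1 := (hPnorm ξ).trans h1
      have hnotA : ξ ∉ A := fun hξ => absurd hξ.2 (not_lt.mpr h1)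
      rw [Set.indicator_of_notMem hnotA]
      simp only [hgdef, if_pos h1, if_pos h2, hinner]
      ring
    · by_cases h2 : ‖P ξ‖ ≤ 1
      · have hmemA : ξ ∈ A := ⟨h2, not_le.mp h1⟩
        rw [Set.indicator_of_mem hmemA]
        simp only [hgdef, if_neg h1, if_pos h2, hinner, inner_zero_left]
        ring
      · have hnotA : ξ ∉ A := fun hξ => absurd hξ.1 h2
        rw [Set.indicator_of_notMem hnotA]
        simp only [hgdef, if_neg h1, if_neg h2, hinner, inner_zero_left]
        ring
  -- integral identity
  have hint : (∫ ξ, g (P ξ) ∂m) - (∫ ξ, g ξ ∂m) = ∫ ξ in A, ⟪P ξ, u⟫ ∂m := by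
    rw [← integral_sub hg2 hg1, ← integral_indicator hA]
    exact integral_congr_ae (Filter.Eventually.of_forall hdiff)
  -- inner product of the set integral
  have hII : ⟪∫ ξ in A, P ξ ∂m, u⟫ = ∫ ξ in A, ⟪P ξ, u⟫ ∂m := by
    calc ⟪∫ ξ in A, P ξ ∂m, u⟫ = ⟪u, ∫ ξ in A, P ξ ∂m⟫ := real_inner_comm _ _
      _ = ∫ ξ in A, ⟪u, P ξ⟫ ∂m := (integral_inner hIA u).symm
      _ = ∫ ξ in A, ⟪P ξ, u⟫ ∂m :=
          integral_congr_ae (Filter.Eventually.of_forall fun ξ => real_inner_comm _ _)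
  have hPb : ⟪P b, u⟫ = ⟪b, u⟫ := by rw [hsym, hPu]
  refine ⟨hIA, hg1, hg2, ?_⟩
  rw [inner_add_left, hPb, hII]
  linarith [hint]
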